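/- Let Z⁽ⁿ⁾ be a symmetric random walk of length n ≥ 1. Then the conditional expectation of Z⁽ⁿ⁾ given the event {Z⁽ⁿ⁾ ≤ 0} satisfies E[Z⁽ⁿ⁾ | Z⁽ⁿ⁾ ≤ 0] ≥ −√n. -/

import Mathlib

open MeasureTheory ProbabilityTheory Real
open scoped Classical

noncomputable def radMeasure : Measure ℝ :=
  (2⁻¹ : ENNReal) • (Measure.dirac 1 + Measure.dirac (-1))

instance : IsFiniteMeasure radMeasure := by
  constructor
  simp [radMeasure]

lemma radMeasure_apply {s : Set ℝ} (hs : MeasurableSet s) :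
    radMeasure s = (if (1:ℝ) ∈ s then (2⁻¹ : ENNReal) else 0)
      + (if (-1:ℝ) ∈ s then (2⁻¹ : ENNReal) else 0) := by
  simp only [radMeasure, Measure.smul_apply, Measure.add_apply, smul_eq_mul,
    Measure.dirac_apply' _ hs, Set.indicator_apply, Set.mem_setOf_eq, Pi.one_apply]
  split_ifs <;> ring

lemma radMeasure_neg {s : Set ℝ} (hs : MeasurableSet s) :
    radMeasure (Neg.neg ⁻¹' s) = radMeasure s := by
  rw [radMeasure_apply (hs.preimage measurable_neg), radMeasure_apply hs]
  simp only [Set.mem_preimage, neg_neg]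
  rw [add_comm]

lemma aux_marginal {Ω : Type*} [MeasurableSpace Ω] (μ : Measure Ω) [IsProbabilityMeasure μ]
    (f : Ω → ℝ) (hf : Measurable f) (h1 : μ {ω | f ω = 1} = 1 / 2)
    (h2 : μ {ω | f ω = -1} = 1 / 2) :
    (∀ᵐ ω ∂μ, f ω = 1 ∨ f ω = -1) ∧
      ∀ s : Set ℝ, MeasurableSet s → μ (f ⁻¹' s) = radMeasure s := by
  have hS1 : {ω | f ω = 1} = f ⁻¹' {1} := rfl
  have hS2 : {ω | f ω = -1} = f ⁻¹' {(-1:ℝ)} := rfl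
  have hm1 : MeasurableSet {ω | f ω = 1} := hS1 ▸ hf (measurableSet_singleton _)
  have hm2 : MeasurableSet {ω | f ω = -1} := hS2 ▸ hf (measurableSet_singleton _)
  have hdisj : Disjoint {ω | f ω = 1} {ω | f ω = -1} := by
    rw [Set.disjoint_left]
    intro ω ha hb
    simp only [Set.mem_setOf_eq] at ha hb
    rw [ha] at hb; norm_num at hb
  have hunion : μ ({ω | f ω = 1} ∪ {ω | f ω = -1}) = 1 := by
    rw [measure_union hdisj hm2, h1, h2, ENNReal.add_halves]
  have hcompl : μ ({ω | f ω = 1} ∪ {ω | f ω = -1})ᶜ = 0 := by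
    rw [measure_compl (hm1.union hm2) (measure_ne_top μ _), hunion, measure_univ, tsub_self]
  constructor
  · rw [ae_iff]
    convert hcompl using 2
    ext ω; simp
  · intro s hs
    have key : μ (f ⁻¹' s) = μ (f ⁻¹' s ∩ ({ω | f ω = 1} ∪ {ω | f ω = -1})) :=
      (measure_inter_conull hcompl).symm
    rw [key, Set.inter_union_distrib_left,
      measure_union (hdisj.mono Set.inter_subset_right Set.inter_subset_right)
        ((hf hs).inter hm2)]
    have e1 : f ⁻¹' s ∩ {ω | f ω = 1} = if (1:ℝ) ∈ s then {ω | f ω = 1} else ∅ := by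
      split_ifs with h
      · ext ω; simp only [Set.mem_inter_iff, Set.mem_preimage, Set.mem_setOf_eq]
        exact ⟨fun ⟨_, hb⟩ => hb, fun hb => ⟨hb ▸ h, hb⟩⟩
      · ext ω; simp only [Set.mem_inter_iff, Set.mem_preimage, Set.mem_setOf_eq,
          Set.mem_empty_iff_false, iff_false]
        rintro ⟨ha, hb⟩; exact h (hb ▸ ha)
    have e2 : f ⁻¹' s ∩ {ω | f ω = -1} = if (-1:ℝ) ∈ s then {ω | f ω = -1} else ∅ := by
      split_ifs with h
      · ext ω; simp only [Set.mem_inter_iff, Set.mem_preimage, Set.mem_setOf_eq]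
        exact ⟨fun ⟨_, hb⟩ => hb, fun hb => ⟨hb ▸ h, hb⟩⟩
      · ext ω; simp only [Set.mem_inter_iff, Set.mem_preimage, Set.mem_setOf_eq,
          Set.mem_empty_iff_false, iff_false]
        rintro ⟨ha, hb⟩; exact h (hb ▸ ha)
    rw [e1, e2, radMeasure_apply hs]
    split_ifs <;> simp [h1, h2, ENNReal.div_eq_inv_mul]

lemma aux_symm {Ω : Type*} [MeasurableSpace Ω] (μ : Measure Ω) [IsProbabilityMeasure μ]
    (n : ℕ) (Y : Fin n → Ω → ℝ) (hY : ∀ t, Measurable (Y t))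
    (hindep : iIndepFun Y μ)
    (hmarg : ∀ t, ∀ s : Set ℝ, MeasurableSet s → μ (Y t ⁻¹' s) = radMeasure s) :
    μ {ω | ∑ t, Y t ω ≤ 0} = μ {ω | 0 ≤ ∑ t, Y t ω} := by
  set vec : Ω → (Fin n → ℝ) := fun ω t => Y t ω with hvecdef
  have hvec : Measurable vec := measurable_pi_lambda _ fun t => hY t
  have hjoint : μ.map vec = Measure.pi (fun _ : Fin n => radMeasure) := by
    refine (Measure.pi_eq fun s hs => ?_).symm
    rw [Measure.map_apply hvec (MeasurableSet.univ_pi hs)]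
    have hpre : vec ⁻¹' Set.pi Set.univ s = ⋂ t, Y t ⁻¹' s t := by
      ext ω; simp [Set.mem_pi, hvecdef]
    rw [hpre, hindep.meas_iInter (fun t => ⟨s t, hs t, rfl⟩)]
    exact Finset.prod_congr rfl fun t _ => hmarg t (s t) (hs t)
  set N : (Fin n → ℝ) → (Fin n → ℝ) := fun x t => -(x t) with hNdef
  have hN : Measurable N := measurable_pi_lambda _ fun t => (measurable_pi_apply t).neg
  have hpineg : (Measure.pi (fun _ : Fin n => radMeasure)).map N
      = Measure.pi (fun _ : Fin n => radMeasure) := by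
    refine (Measure.pi_eq fun s hs => ?_).symm
    rw [Measure.map_apply hN (MeasurableSet.univ_pi hs)]
    have hpre : N ⁻¹' Set.pi Set.univ s = Set.pi Set.univ (fun t => Neg.neg ⁻¹' s t) := by
      ext x; simp [Set.mem_pi, hNdef]
    rw [hpre, Measure.pi_pi]
    exact Finset.prod_congr rfl fun t _ => radMeasure_neg (hs t)
  have hsum : Measurable (fun x : Fin n → ℝ => ∑ t, x t) :=
    Finset.measurable_sum _ fun t _ => measurable_pi_apply t
  have hsetle : MeasurableSet {x : Fin n → ℝ | ∑ t, x t ≤ 0} :=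
    measurableSet_le hsum measurable_const
  have h1 : μ {ω | ∑ t, Y t ω ≤ 0}
      = Measure.pi (fun _ : Fin n => radMeasure) {x | ∑ t, x t ≤ 0} := by
    rw [← hjoint, Measure.map_apply hvec hsetle]
    rfl
  have h2 : μ {ω | 0 ≤ ∑ t, Y t ω}
      = Measure.pi (fun _ : Fin n => radMeasure) {x | 0 ≤ ∑ t, x t} := by
    rw [← hjoint, Measure.map_apply hvec (measurableSet_le measurable_const hsum)]
    rfl
  have h3 : {x : Fin n → ℝ | 0 ≤ ∑ t, x t} = N ⁻¹' {x | ∑ t, x t ≤ 0} := by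
    ext x
    simp [hNdef, Finset.sum_neg_distrib, neg_nonpos]
  rw [h1, h2, h3, ← Measure.map_apply hN hsetle, hpineg]

/-- The conditional expectation of a symmetric random walk of length `n ≥ 1`
(a sum `Z⁽ⁿ⁾ = ∑ₜ Yₜ` of `n` i.i.d. Rademacher variables) given the event
`{Z⁽ⁿ⁾ ≤ 0}` satisfies `E[Z⁽ⁿ⁾ | Z⁽ⁿ⁾ ≤ 0] ≥ −√n`. -/
theorem random_walk_conditional_expectation_lower_bound {Ω : Type*} [MeasurableSpace Ω]
    (μ : Measure Ω) [IsProbabilityMeasure μ]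
    (n : ℕ) (hn : 1 ≤ n)
    (Y : Fin n → Ω → ℝ) (hY : ∀ t, Measurable (Y t))
    (hindep : iIndepFun Y μ)
    (hrad : ∀ t, μ {ω | Y t ω = 1} = 1 / 2 ∧ μ {ω | Y t ω = -1} = 1 / 2) :
    (∫ ω in {ω | ∑ t, Y t ω ≤ 0}, (∑ t, Y t ω) ∂μ) /
        (μ {ω | ∑ t, Y t ω ≤ 0}).toReal ≥ -Real.sqrt n := by
  have haux := fun t => aux_marginal μ (Y t) (hY t) (hrad t).1 (hrad t).2
  have hae : ∀ t, ∀ᵐ ω ∂μ, Y t ω = 1 ∨ Y t ω = -1 := fun t => (haux t).1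
  have hbound : ∀ t, ∀ᵐ ω ∂μ, ‖Y t ω‖ ≤ 1 := fun t =>
    (hae t).mono (by rintro ω (h | h) <;> simp [h])
  have hint : ∀ t, Integrable (Y t) μ := fun t =>
    memLp_one_iff_integrable.mp
      (MemLp.of_bound (hY t).aestronglyMeasurable 1 (hbound t))
  -- expectation of each Y t is 0
  have hEY : ∀ t, ∫ ω, Y t ω ∂μ = 0 := by
    intro t
    have hm1 : MeasurableSet {ω | Y t ω = 1} := (hY t) (measurableSet_singleton (1:ℝ))
    have hm2 : MeasurableSet {ω | Y t ω = -1} := (hY t) (measurableSet_singleton (-1:ℝ))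
    have heq : Y t =ᵐ[μ] fun ω =>
        Set.indicator {ω | Y t ω = 1} (fun _ => (1:ℝ)) ω
          + Set.indicator {ω | Y t ω = -1} (fun _ => (-1:ℝ)) ω := by
      refine (hae t).mono ?_
      rintro ω (h | h) <;>
        simp [Set.indicator_apply, Set.mem_setOf_eq, h] <;> norm_num
    rw [integral_congr_ae heq, integral_add
        ((integrable_const (1:ℝ)).indicator hm1) ((integrable_const (-1:ℝ)).indicator hm2),
      integral_indicator_const _ hm1, integral_indicator_const _ hm2,
      measureReal_def, measureReal_def, (hrad t).1, (hrad t).2]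
    norm_num
  -- second moments
  have hmulint : ∀ t s : Fin n, Integrable (fun ω => Y t ω * Y s ω) μ := by
    intro t s
    refine memLp_one_iff_integrable.mp
      (MemLp.of_bound (((hY t).mul (hY s)).aestronglyMeasurable) 1 ?_)
    filter_upwards [hbound t, hbound s] with ω h1 h2
    calc ‖Y t ω * Y s ω‖ = ‖Y t ω‖ * ‖Y s ω‖ := norm_mul _ _
    _ ≤ 1 * 1 := mul_le_mul h1 h2 (norm_nonneg _) zero_le_one
    _ = 1 := one_mul 1
  have hmul : ∀ t s : Fin n, t ≠ s → ∫ ω, Y t ω * Y s ω ∂μ = 0 := by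
    intro t s hts
    have h1 := IndepFun.integral_mul_eq_mul_integral (hindep.indepFun hts) (hint t).aestronglyMeasurable (hint s).aestronglyMeasurable
    have h2 : (fun ω => Y t ω * Y s ω) = Y t * Y s := rfl
    show integral μ (fun ω => Y t ω * Y s ω) = 0
    rw [h2, h1, hEY t, hEY s, zero_mul]
  have hsq : ∀ t : Fin n, ∫ ω, Y t ω * Y t ω ∂μ = 1 := by
    intro t
    have : (fun ω => Y t ω * Y t ω) =ᵐ[μ] fun _ => (1:ℝ) := by
      refine (hae t).mono ?_
      rintro ω (h | h) <;> simp [h]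
    rw [integral_congr_ae this, integral_const, measureReal_def, measure_univ]
    simp
  set Z : Ω → ℝ := fun ω => ∑ t, Y t ω with hZdef
  have hZmeas : Measurable Z := Finset.measurable_sum _ fun t _ => hY t
  have hZbound : ∀ᵐ ω ∂μ, ‖Z ω‖ ≤ (n : ℝ) := by
    filter_upwards [ae_all_iff.mpr hbound] with ω h
    calc ‖Z ω‖ ≤ ∑ t, ‖Y t ω‖ := norm_sum_le _ _
    _ ≤ ∑ _t : Fin n, (1:ℝ) := Finset.sum_le_sum fun t _ => h t
    _ = n := by simp
  have hZL2 : MemLp Z 2 μ := MemLp.of_bound hZmeas.aestronglyMeasurable _ hZbound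
  have hZint : Integrable Z μ := memLp_one_iff_integrable.mp
    (MemLp.of_bound hZmeas.aestronglyMeasurable _ hZbound)
  have hEZ : ∫ ω, Z ω ∂μ = 0 := by
    rw [hZdef]
    rw [integral_finset_sum _ fun t _ => hint t]
    simp [hEY]
  have hEZsq : ∫ ω, Z ω ^ 2 ∂μ = n := by
    have hexp : ∀ ω, Z ω ^ 2 = ∑ t, ∑ s, Y t ω * Y s ω := by
      intro ω
      rw [hZdef, sq, Finset.sum_mul_sum]
    calc ∫ ω, Z ω ^ 2 ∂μ = ∫ ω, ∑ t, ∑ s, Y t ω * Y s ω ∂μ := by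
          exact integral_congr_ae (Filter.Eventually.of_forall hexp)
    _ = ∑ t, ∑ s, ∫ ω, Y t ω * Y s ω ∂μ := by
          rw [integral_finset_sum _ fun t _ => integrable_finset_sum _ fun s _ => hmulint t s]
          exact Finset.sum_congr rfl fun t _ =>
            integral_finset_sum _ fun s _ => hmulint t s
    _ = ∑ t : Fin n, (1:ℝ) := by
          refine Finset.sum_congr rfl fun t _ => ?_
          rw [Finset.sum_eq_single t (fun s _ hst => hmul t s (Ne.symm hst)) (by simp)]
          exact hsq t
    _ = n := by simp
  -- E|Z| ≤ sqrt n
  have habsL2 : MemLp (fun ω => |Z ω|) 2 μ := hZL2.abs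
  have habsint : Integrable (fun ω => |Z ω|) μ := hZint.abs
  have hvar := variance_nonneg (fun ω => |Z ω|) μ
  rw [variance_eq_sub habsL2] at hvar
  simp only [Pi.pow_apply] at hvar
  have habs_sq : (∫ ω, |Z ω| ∂μ) ^ 2 ≤ (n : ℝ) := by
    have h1 : (∫ ω, |Z ω| ∂μ) ^ 2 ≤ ∫ ω, |Z ω| ^ 2 ∂μ := by linarith
    have h2 : ∫ ω, |Z ω| ^ 2 ∂μ = ∫ ω, Z ω ^ 2 ∂μ := by
      refine integral_congr_ae (Filter.Eventually.of_forall fun ω => ?_)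
      exact sq_abs _
    rw [h2, hEZsq] at h1
    exact h1
  have habs_le : ∫ ω, |Z ω| ∂μ ≤ Real.sqrt n := by
    have h0 : 0 ≤ ∫ ω, |Z ω| ∂μ := integral_nonneg fun ω => abs_nonneg _
    nlinarith [Real.sq_sqrt (show (0:ℝ) ≤ (n:ℝ) from Nat.cast_nonneg n),
      Real.sqrt_nonneg (n:ℝ), habs_sq, h0]
  -- the conditioning event
  set A : Set Ω := {ω | Z ω ≤ 0} with hAdef
  have hA : MeasurableSet A := measurableSet_le hZmeas measurable_const
  have hI : ∫ ω in A, Z ω ∂μ = (∫ ω, Z ω ∂μ - ∫ ω, |Z ω| ∂μ) / 2 := by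
    have hind : ∫ ω in A, Z ω ∂μ = ∫ ω, Set.indicator A Z ω ∂μ :=
      (integral_indicator hA).symm
    have heq : ∀ ω, Set.indicator A Z ω = (Z ω - |Z ω|) / 2 := by
      intro ω
      by_cases h : Z ω ≤ 0
      · simp [Set.indicator_apply, hAdef, Set.mem_setOf_eq, h, abs_of_nonpos h]
      · simp [Set.indicator_apply, hAdef, Set.mem_setOf_eq, h,
          abs_of_pos (lt_of_not_ge h)]
    rw [hind, integral_congr_ae (Filter.Eventually.of_forall heq)]
    rw [integral_div, integral_sub hZint habsint]
  -- probability of A is at least 1/2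
  have hmarg : ∀ t, ∀ s : Set ℝ, MeasurableSet s → μ (Y t ⁻¹' s) = radMeasure s :=
    fun t => (haux t).2
  have hsymm : μ A = μ {ω | 0 ≤ Z ω} := aux_symm μ n Y hY hindep hmarg
  have hhalf : (2⁻¹ : ENNReal) ≤ μ A := by
    by_contra hcon
    push_neg at hcon
    have hun : A ∪ {ω | 0 ≤ Z ω} = Set.univ := by
      ext ω; simp [hAdef, le_total (Z ω) 0]
    have h1 : (1 : ENNReal) ≤ μ A + μ {ω | 0 ≤ Z ω} := by
      calc (1:ENNReal) = μ (A ∪ {ω | 0 ≤ Z ω}) := by rw [hun, measure_univ]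
      _ ≤ μ A + μ {ω | 0 ≤ Z ω} := measure_union_le _ _
    rw [← hsymm] at h1
    have h2 : μ A + μ A < 2⁻¹ + 2⁻¹ := ENNReal.add_lt_add hcon hcon
    rw [ENNReal.inv_two_add_inv_two] at h2
    exact absurd (lt_of_le_of_lt h1 h2) (lt_irrefl _)
  have hp : (1:ℝ)/2 ≤ (μ A).toReal := by
    have := ENNReal.toReal_mono (measure_ne_top μ A) hhalf
    simpa using this
  have hp0 : (0:ℝ) < (μ A).toReal := lt_of_lt_of_le (by norm_num) hp
  -- conclude
  rw [ge_iff_le, le_div_iff₀ hp0]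
  have hsn : 0 ≤ Real.sqrt n := Real.sqrt_nonneg _
  have hIval : ∫ ω in A, Z ω ∂μ = -(∫ ω, |Z ω| ∂μ) / 2 := by
    rw [hI, hEZ]; ring
  calc -Real.sqrt n * (μ A).toReal ≤ -Real.sqrt n * (1/2) := by
        exact mul_le_mul_of_nonpos_left hp (neg_nonpos.mpr hsn)
  _ = -(Real.sqrt n) / 2 := by ring
  _ ≤ -(∫ ω, |Z ω| ∂μ) / 2 := by linarith
  _ = ∫ ω in A, Z ω ∂μ := hIval.symm
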